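/- arXiv:0908.0181 — 2 statements merged into one kernel-verified Lean document; each statement's English description precedes it below -/
import Mathlib

section
/- Let M be a simple matroid of rank r with 3r-3 elements, all lines having at most 3 elements, real characteristic roots, and χ(M;2) = 0. If M has exactly 3r-5 three-point lines, then χ(M;λ) = (λ-1)(λ-2)(λ-3)^{r-2}. -/
open Finset Polynomial

set_option linter.unusedSectionVars false
set_option maxHeartbeats 1000000

section MatroidDefs

variable {α : Type} [Fintype α] [DecidableEq α]

/-- The rank of a set `X` in a matroid `M`: the largest size of an independent subset
of `X`. -/
noncomputable def mrk (M : Matroid α) (X : Set α) : ℕ :=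
  sSup {n | ∃ I, M.Indep I ∧ I ⊆ X ∧ I.ncard = n}

/-- A matroid is simple if every pair of elements of the ground set is independent
(equivalently, it has no loops and no parallel pairs). -/
def mSimple (M : Matroid α) : Prop :=
  ∀ e f, e ∈ M.E → f ∈ M.E → M.Indep {e, f}

/-- The characteristic polynomial of a matroid on the ground set `α`, via the Whitney
rank expansion `χ(M;λ) = Σ_{A ⊆ E} (-1)^{|A|} λ^{r(E) - r(A)}` (which agrees with the
Möbius-function definition for loopless matroids). -/
noncomputable def charPoly (M : Matroid α) : Polynomial ℤ :=
  ∑ A : Finset α, C ((-1 : ℤ) ^ A.card) * X ^ (mrk M Set.univ - mrk M (A : Set α))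

/-- The number of lines (rank-2 flats) of `M` with exactly `k` points. -/
noncomputable def lineCount (M : Matroid α) (k : ℕ) : ℕ :=
  Nat.card {F : Set α | M.IsFlat F ∧ mrk M F = 2 ∧ F.ncard = k}

/-- Every line (rank-2 flat) of `M` has at most 3 points. -/
def linesAtMost3 (M : Matroid α) : Prop :=
  ∀ F : Set α, M.IsFlat F → mrk M F = 2 → F.ncard ≤ 3

/-- An integer polynomial has only real roots. -/
def onlyRealRoots (p : Polynomial ℤ) : Prop :=
  (p.map (Int.castRingHom ℝ)).Splits

/-- An integer polynomial has only integral roots: every complex root is an integer. -/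
def onlyIntegerRoots (p : Polynomial ℤ) : Prop :=
  ∀ z ∈ (p.map (Int.castRingHom ℂ)).roots, ∃ k : ℤ, z = (k : ℂ)

/-- A matroid is connected if no proper nonempty subset of the ground set gives an
additive separation of the rank. -/
def mConnected (M : Matroid α) : Prop :=
  M.E.Nonempty ∧ ∀ A : Set α, A ⊆ M.E → A.Nonempty → (M.E \ A).Nonempty →
    mrk M A + mrk M (M.E \ A) ≠ mrk M M.E

/-- A flat `X` of `M` is modular if every line `L` with
`rank(X ∨ L) = rank(X) + 1` meets `X`. -/
def modularFlat (M : Matroid α) (Y : Set α) : Prop :=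
  M.IsFlat Y ∧ ∀ L : Set α, M.IsFlat L → mrk M L = 2 →
    mrk M (Y ∪ L) = mrk M Y + 1 → (Y ∩ L).Nonempty

end MatroidDefs

lemma matroid_closure_flat {α : Type} (M : Matroid α) (X : Set α) : M.IsFlat (M.closure X) := by
  exact M.isFlat_closure X

section MatroidDefs
variable {α : Type} [Fintype α] [DecidableEq α]

namespace MrkAux
variable {M : Matroid α} {X Y I A : Set α}

lemma bdd (X : Set α) : BddAbove {n | ∃ I, M.Indep I ∧ I ⊆ X ∧ I.ncard = n} := by
  refine ⟨Fintype.card α, fun n hn => ?_⟩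
  obtain ⟨I, -, -, rfl⟩ := hn
  simpa [Set.ncard_univ, Nat.card_eq_fintype_card] using
    Set.ncard_le_ncard (Set.subset_univ I) Set.finite_univ

lemma le_mrk (hI : M.Indep I) (hIX : I ⊆ X) : I.ncard ≤ mrk M X :=
  le_csSup (bdd X) ⟨I, hI, hIX, rfl⟩

lemma exists_indep (M : Matroid α) (X : Set α) :
    ∃ I, M.Indep I ∧ I ⊆ X ∧ I.ncard = mrk M X := by
  have h : mrk M X ∈ {n | ∃ I, M.Indep I ∧ I ⊆ X ∧ I.ncard = n} :=
    Nat.sSup_mem ⟨0, ∅, M.empty_indep, Set.empty_subset X, by simp⟩ (bdd X)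
  exact h

lemma mrk_mono (h : X ⊆ Y) : mrk M X ≤ mrk M Y := by
  obtain ⟨I, hI, hIX, hc⟩ := exists_indep M X
  exact hc ▸ le_mrk hI (hIX.trans h)

lemma mrk_le_ncard (X : Set α) : mrk M X ≤ X.ncard := by
  obtain ⟨I, hI, hIX, hc⟩ := exists_indep M X
  exact hc ▸ Set.ncard_le_ncard hIX (Set.toFinite X)

lemma indep_ncard_le_of_subset_closure (hE : M.E = Set.univ) (hI : M.Indep I)
    (hs : I ⊆ M.closure A) : I.ncard ≤ mrk M A := by
  have hAE : A ⊆ M.E := hE ▸ Set.subset_univ A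
  obtain ⟨J, hJ⟩ := M.exists_isBasis A hAE
  have hJc := hJ.isBasis_closure_right
  obtain ⟨I', hI'b, hII'⟩ := hI.subset_isBasis_of_subset hs (M.closure_subset_ground A)
  have hcard : I'.ncard = J.ncard :=
    Matroid.IsBase.ncard_eq_ncard_of_isBase hI'b.isBase_restrict hJc.isBase_restrict
  calc I.ncard ≤ I'.ncard := Set.ncard_le_ncard hII' (Set.toFinite I')
    _ = J.ncard := hcard
    _ ≤ mrk M A := le_mrk hJ.indep hJ.subset

lemma mrk_closure (hE : M.E = Set.univ) (A : Set α) : mrk M (M.closure A) = mrk M A := by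
  refine le_antisymm ?_ (mrk_mono (M.subset_closure A (hE ▸ Set.subset_univ A)))
  obtain ⟨I, hI, hIX, hc⟩ := exists_indep M (M.closure A)
  exact hc ▸ indep_ncard_le_of_subset_closure hE hI hIX

variable (hE : M.E = Set.univ) (hs : mSimple M)
include hE hs

lemma one_le_mrk (hX : X.Nonempty) : 1 ≤ mrk M X := by
  obtain ⟨e, he⟩ := hX
  have h1 : M.Indep {e} := by
    have := hs e e (hE ▸ Set.mem_univ e) (hE ▸ Set.mem_univ e)
    simpa using this
  simpa using le_mrk h1 (Set.singleton_subset_iff.2 he)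

lemma two_le_mrk {e f : α} (he : e ∈ X) (hf : f ∈ X) (hef : e ≠ f) : 2 ≤ mrk M X := by
  have h2 : M.Indep {e, f} := hs e f (hE ▸ Set.mem_univ e) (hE ▸ Set.mem_univ f)
  have := le_mrk h2 (by rw [Set.insert_subset_iff, Set.singleton_subset_iff]; exact ⟨he, hf⟩)
  rwa [Set.ncard_pair hef] at this

lemma mrk_eq_zero_iff : mrk M X = 0 ↔ X = ∅ := by
  constructor
  · intro h
    by_contra hne
    have := one_le_mrk hE hs (Set.nonempty_iff_ne_empty.2 hne)
    omega
  · rintro rfl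
    simpa using mrk_le_ncard (M := M) ∅

lemma mrk_eq_one_iff : mrk M X = 1 ↔ X.ncard = 1 := by
  constructor
  · intro h
    have hne : X.Nonempty := by
      rw [Set.nonempty_iff_ne_empty]; rintro rfl
      rw [(mrk_eq_zero_iff hE hs).2 rfl] at h; omega
    rcases Set.eq_singleton_or_nontrivial hne.some_mem with h1 | h1
    · rw [h1]; simp
    · obtain ⟨e, he, f, hf, hef⟩ := h1
      have := two_le_mrk hE hs he hf hef
      omega
  · intro h
    obtain ⟨a, rfl⟩ := Set.ncard_eq_one.1 h
    refine le_antisymm (by simpa using mrk_le_ncard (M := M) {a})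
      (one_le_mrk hE hs ⟨a, rfl⟩)

lemma card_le_two_of_mrk_one (h : mrk M X = 1) : X.ncard = 1 := (mrk_eq_one_iff hE hs).1 h

lemma mrk_pair (h2 : X.ncard = 2) : mrk M X = 2 := by
  obtain ⟨e, f, hef, rfl⟩ := Set.ncard_eq_two.1 h2
  exact le_antisymm (h2 ▸ mrk_le_ncard _)
    (two_le_mrk hE hs (by simp) (by simp) hef)

lemma ncard_le_three_of_mrk_two (hl : linesAtMost3 M) (h : mrk M X = 2) : X.ncard ≤ 3 := by
  have hflat : M.IsFlat (M.closure X) := matroid_closure_flat M X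
  have h2 : mrk M (M.closure X) = 2 := by rw [mrk_closure hE]; exact h
  have := hl _ hflat h2
  exact le_trans (Set.ncard_le_ncard (M.subset_closure X (hE ▸ Set.subset_univ X))
    (Set.toFinite _)) this

lemma two_le_ncard_of_mrk_two (h : mrk M X = 2) : 2 ≤ X.ncard := by
  have := mrk_le_ncard (M := M) X; omega

lemma flat_of_mrk_two_ncard_three (hl : linesAtMost3 M) (h2 : mrk M X = 2)
    (h3 : X.ncard = 3) : M.IsFlat X := by
  have hsub : X ⊆ M.closure X := M.subset_closure X (hE ▸ Set.subset_univ X)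
  have hflat : M.IsFlat (M.closure X) := matroid_closure_flat M X
  have hcl2 : mrk M (M.closure X) = 2 := by rw [mrk_closure hE]; exact h2
  have hle : (M.closure X).ncard ≤ X.ncard := h3 ▸ hl _ hflat hcl2
  have : X = M.closure X := Set.eq_of_subset_of_ncard_le hsub hle (Set.toFinite _)
  exact this ▸ hflat

end MrkAux
section Coeffs
variable {α : Type} [Fintype α] [DecidableEq α] {M : Matroid α} {r : ℕ}

open MrkAux

lemma charPoly_coeff (M : Matroid α) (j : ℕ) :
    (charPoly M).coeff j =
      ∑ A ∈ univ.filter (fun A : Finset α => mrk M Set.univ - mrk M (A : Set α) = j),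
        (-1 : ℤ) ^ A.card := by
  rw [charPoly, finset_sum_coeff, Finset.sum_filter]
  refine Finset.sum_congr rfl fun A _ => ?_
  rw [coeff_C_mul, coeff_X_pow]
  split_ifs <;> simp_all [eq_comm]

lemma filter_card_eq' (k : ℕ) :
    (univ.filter (fun A : Finset α => A.card = k)).card = (Fintype.card α).choose k := by
  rw [← Finset.card_univ, ← Finset.card_powersetCard, Finset.powersetCard_eq_filter,
    Finset.powerset_univ]

variable (hE : M.E = Set.univ) (hs : mSimple M) (hr : mrk M Set.univ = r)
include hE hs hr

lemma mrk_le_r (A : Finset α) : mrk M (A : Set α) ≤ r :=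
  hr ▸ mrk_mono (Set.subset_univ _)

lemma charPoly_coeff_gt {j : ℕ} (hj : r < j) : (charPoly M).coeff j = 0 := by
  rw [charPoly_coeff]
  convert Finset.sum_empty
  rw [Finset.filter_eq_empty_iff]
  intro A _
  have h1 := mrk_le_r hE hs hr A
  omega

lemma charPoly_coeff_r (hrpos : 1 ≤ r) : (charPoly M).coeff r = 1 := by
  rw [charPoly_coeff]
  have : (univ.filter (fun A : Finset α => mrk M Set.univ - mrk M (A : Set α) = r))
      = {(∅ : Finset α)} := by
    ext A
    simp only [Finset.mem_filter, Finset.mem_univ, true_and, Finset.mem_singleton, hr]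
    constructor
    · intro h
      have h1 := mrk_le_r hE hs hr A
      have h0 : mrk M (A : Set α) = 0 := by omega
      have := (mrk_eq_zero_iff hE hs).1 h0
      exact_mod_cast Finset.coe_injective (by simpa using this)
    · rintro rfl
      have : mrk M ((∅ : Finset α) : Set α) = 0 := by
        rw [Finset.coe_empty, (mrk_eq_zero_iff hE hs)]
      rw [this]; omega
  rw [this]; simp

lemma charPoly_coeff_r1 (hr2 : 1 ≤ r) :
    (charPoly M).coeff (r - 1) = -(Fintype.card α : ℤ) := by
  rw [charPoly_coeff]
  have hset : (univ.filter (fun A : Finset α => mrk M Set.univ - mrk M (A : Set α) = r - 1))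
      = univ.filter (fun A : Finset α => A.card = 1) := by
    ext A
    simp only [Finset.mem_filter, Finset.mem_univ, true_and, hr]
    have h1 := mrk_le_r hE hs hr A
    have hone : mrk M (A : Set α) = 1 ↔ A.card = 1 := by
      rw [mrk_eq_one_iff hE hs, Set.ncard_coe_finset]
    constructor
    · intro h
      have : mrk M (A : Set α) = 1 := by omega
      exact hone.1 this
    · intro h
      have := hone.2 h
      omega
  rw [hset]
  have hconst : ∑ A ∈ univ.filter (fun A : Finset α => A.card = 1), (-1 : ℤ) ^ A.card
      = ∑ _A ∈ univ.filter (fun A : Finset α => A.card = 1), (-1 : ℤ) := by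
    refine Finset.sum_congr rfl fun A hA => ?_
    rw [(Finset.mem_filter.1 hA).2]; ring
  rw [hconst, Finset.sum_const, filter_card_eq', Nat.choose_one_right]
  simp [mul_comm]

end Coeffs

section Coeffs2
variable {α : Type} [Fintype α] [DecidableEq α] {M : Matroid α} {r : ℕ}
open MrkAux

variable (hE : M.E = Set.univ) (hs : mSimple M) (hl : linesAtMost3 M)
include hE hs hl

lemma lineCount_eq_filter :
    lineCount M 3 = (univ.filter (fun A : Finset α => mrk M (A : Set α) = 2 ∧ A.card = 3)).card := by
  set S := univ.filter (fun A : Finset α => mrk M (A : Set α) = 2 ∧ A.card = 3) with hS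
  have hseteq : {F : Set α | M.IsFlat F ∧ mrk M F = 2 ∧ F.ncard = 3}
      = (fun A : Finset α => (A : Set α)) '' (S : Set (Finset α)) := by
    ext F
    constructor
    · rintro ⟨hF, h2, h3⟩
      refine ⟨(Set.toFinite F).toFinset, ?_, by simp⟩
      simp only [hS, Finset.coe_filter, Set.mem_setOf_eq, Finset.mem_coe, Finset.mem_filter,
        Finset.mem_univ, true_and]
      constructor
      · rw [Set.Finite.coe_toFinset]; exact h2
      · rw [← h3, Set.ncard_eq_toFinset_card _ (Set.toFinite F)]
    · rintro ⟨A, hA, rfl⟩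
      simp only [hS, Finset.mem_coe, Finset.mem_filter, Finset.mem_univ, true_and] at hA
      obtain ⟨h2, h3⟩ := hA
      have h3' : (A : Set α).ncard = 3 := by rw [Set.ncard_coe_finset]; exact h3
      exact ⟨flat_of_mrk_two_ncard_three hE hs hl h2 h3', h2, h3'⟩
  rw [lineCount, hseteq, Nat.card_coe_set_eq,
    Set.ncard_image_of_injective _ Finset.coe_injective, Set.ncard_coe_finset]

variable (hr : mrk M Set.univ = r)
include hr

lemma charPoly_coeff_r2 (hr2 : 2 ≤ r) :
    (charPoly M).coeff (r - 2) = ((Fintype.card α).choose 2 : ℤ) - (lineCount M 3 : ℤ) := by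
  rw [charPoly_coeff]
  have hset : (univ.filter (fun A : Finset α => mrk M Set.univ - mrk M (A : Set α) = r - 2))
      = univ.filter (fun A : Finset α => mrk M (A : Set α) = 2) := by
    ext A
    simp only [Finset.mem_filter, Finset.mem_univ, true_and, hr]
    have h1 := mrk_le_r hE hs hr A
    have h0 : (A : Set α).Nonempty → 1 ≤ mrk M (A : Set α) := one_le_mrk hE hs
    constructor
    · intro h
      -- mrk A ∈ {2} given r - mrk A = r - 2; possible values 2 only unless r small
      rcases Nat.lt_or_ge (mrk M (A : Set α)) 2 with hlt | hge
      · interval_cases hm : mrk M (A : Set α) <;> omega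
      · omega
    · intro h; omega
  rw [hset]
  -- split by card
  have hsplit : univ.filter (fun A : Finset α => mrk M (A : Set α) = 2)
      = (univ.filter (fun A : Finset α => A.card = 2))
        ∪ (univ.filter (fun A : Finset α => mrk M (A : Set α) = 2 ∧ A.card = 3)) := by
    ext A
    simp only [Finset.mem_union, Finset.mem_filter, Finset.mem_univ, true_and]
    constructor
    · intro h2
      have hle3 : (A : Set α).ncard ≤ 3 := ncard_le_three_of_mrk_two hE hs hl h2
      have hge2 : 2 ≤ (A : Set α).ncard := two_le_ncard_of_mrk_two hE hs h2
      rw [Set.ncard_coe_finset] at hle3 hge2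
      rcases Nat.eq_or_lt_of_le hge2 with h | h
      · exact Or.inl h.symm
      · exact Or.inr ⟨h2, by omega⟩
    · rintro (h2 | ⟨h2, -⟩)
      · exact mrk_pair hE hs (by rw [Set.ncard_coe_finset]; exact h2)
      · exact h2
  have hdisj : Disjoint (univ.filter (fun A : Finset α => A.card = 2))
      (univ.filter (fun A : Finset α => mrk M (A : Set α) = 2 ∧ A.card = 3)) := by
    rw [Finset.disjoint_filter]
    rintro A - h2 ⟨-, h3⟩
    omega
  rw [hsplit, Finset.sum_union hdisj]
  have e1 : ∑ A ∈ univ.filter (fun A : Finset α => A.card = 2), (-1 : ℤ) ^ A.card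
      = ((Fintype.card α).choose 2 : ℤ) := by
    have : ∀ A ∈ univ.filter (fun A : Finset α => A.card = 2), (-1 : ℤ) ^ A.card = 1 := by
      intro A hA; rw [(Finset.mem_filter.1 hA).2]; ring
    rw [Finset.sum_congr rfl this, Finset.sum_const, filter_card_eq']
    simp
  have e2 : ∑ A ∈ univ.filter (fun A : Finset α => mrk M (A : Set α) = 2 ∧ A.card = 3),
      (-1 : ℤ) ^ A.card = -(lineCount M 3 : ℤ) := by
    have : ∀ A ∈ univ.filter (fun A : Finset α => mrk M (A : Set α) = 2 ∧ A.card = 3),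
        (-1 : ℤ) ^ A.card = -1 := by
      intro A hA; rw [(Finset.mem_filter.1 hA).2.2]; ring
    rw [Finset.sum_congr rfl this, Finset.sum_const, lineCount_eq_filter hE hs hl]
    simp [mul_comm]
  rw [e1, e2]
  ring

end Coeffs2


lemma charPoly_eval_one {α : Type} [Fintype α] [DecidableEq α] (M : Matroid α)
    (hne : Nonempty α) : (charPoly M).eval 1 = 0 := by
  rw [charPoly]
  simp only [eval_finset_sum, eval_mul, eval_C, eval_pow, eval_X, one_pow, mul_one]
  have h := Finset.sum_powerset_neg_one_pow_card (x := (univ : Finset α))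
  rw [← Finset.powerset_univ]
  rw [h, if_neg (Finset.univ_nonempty.ne_empty)]

lemma multiset_esymm_one (s : Multiset ℝ) : s.esymm 1 = s.sum := by
  rw [Multiset.esymm, Multiset.powersetCard_one, Multiset.map_map]
  simp [Function.comp_def]

lemma multiset_esymm_cons (a : ℝ) (s : Multiset ℝ) (k : ℕ) :
    (a ::ₘ s).esymm (k + 1) = s.esymm (k + 1) + a * s.esymm k := by
  rw [Multiset.esymm, Multiset.powersetCard_cons, Multiset.map_add, Multiset.sum_add,
    Multiset.map_map]
  congr 1
  rw [Multiset.esymm, ← Multiset.sum_map_mul_left]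
  refine congr_arg _ (Multiset.map_congr rfl fun t _ => ?_)
  simp [Multiset.prod_cons]

lemma sq_sum_eq (s : Multiset ℝ) :
    s.sum ^ 2 = (s.map (fun x => x ^ 2)).sum + 2 * s.esymm 2 := by
  induction s using Multiset.induction_on with
  | empty => simp [Multiset.esymm, Multiset.powersetCard_zero_right]
  | cons a s ih =>
    rw [Multiset.sum_cons, Multiset.map_cons, Multiset.sum_cons,
      multiset_esymm_cons, multiset_esymm_one]
    ring_nf
    ring_nf at ih
    linarith [ih]

lemma sum_shift_sq (s : Multiset ℝ) :
    (s.map (fun x => (x - 3) ^ 2)).sum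
      = (s.map (fun x => x ^ 2)).sum - 6 * s.sum + 9 * (Multiset.card s : ℝ) := by
  induction s using Multiset.induction_on with
  | empty => simp
  | cons a s ih =>
    simp only [Multiset.map_cons, Multiset.sum_cons, Multiset.card_cons, ih]
    push_cast
    ring

lemma all_zero_of_nonneg_sum_zero {s : Multiset ℝ} {f : ℝ → ℝ}
    (h0 : ∀ x ∈ s, 0 ≤ f x) (hs : (s.map f).sum = 0) : ∀ x ∈ s, f x = 0 := by
  induction s using Multiset.induction_on with
  | empty => simp
  | cons a s ih =>
    rw [Multiset.map_cons, Multiset.sum_cons] at hs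
    have ha : 0 ≤ f a := h0 a (Multiset.mem_cons_self a s)
    have hrest : 0 ≤ (s.map f).sum := by
      refine Multiset.sum_nonneg fun x hx => ?_
      obtain ⟨y, hy, rfl⟩ := Multiset.mem_map.1 hx
      exact h0 y (Multiset.mem_cons_of_mem hy)
    intro x hx
    rcases Multiset.mem_cons.1 hx with rfl | hx
    · linarith
    · exact ih (fun y hy => h0 y (Multiset.mem_cons_of_mem hy)) (by linarith) x hx

theorem poly_rigid (p : Polynomial ℤ) (r : ℕ) (hr : 2 ≤ r) (n γ : ℕ)
    (hn : (n : ℤ) + 3 = 3 * r) (hγ : (γ : ℤ) + 5 = 3 * r)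
    (hdeg : p.natDegree = r) (hmonic : p.Monic)
    (hc1 : p.coeff (r - 1) = -(n : ℤ))
    (hc2 : p.coeff (r - 2) = (n.choose 2 : ℤ) - (γ : ℤ))
    (h1 : p.eval 1 = 0) (h2 : p.eval 2 = 0)
    (hsplits : (p.map (Int.castRingHom ℝ)).Splits) :
    p = (X - C 1) * (X - C 2) * (X - C 3) ^ (r - 2) := by
  set q : Polynomial ℝ := p.map (Int.castRingHom ℝ) with hq
  have hqmonic : q.Monic := hmonic.map _
  have hqdeg : q.natDegree = r := by
    rw [hq, hmonic.natDegree_map, hdeg]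
  have hqlead : q.leadingCoeff = 1 := hqmonic
  have hRcard : Multiset.card q.roots = r := by
    rw [← hqdeg]; exact (Polynomial.splits_iff_card_roots).1 hsplits
  set R := q.roots with hR
  -- coefficients via Vieta
  have hv1 : q.coeff (r - 1) = -(R.esymm 1) := by
    have := Polynomial.coeff_eq_esymm_roots_of_splits hsplits
      (k := r - 1) (by omega)
    rw [this, hqlead, hqdeg]
    have h1' : r - (r - 1) = 1 := by omega
    rw [h1']; ring
  have hv2 : q.coeff (r - 2) = R.esymm 2 := by
    have := Polynomial.coeff_eq_esymm_roots_of_splits hsplits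
      (k := r - 2) (by omega)
    rw [this, hqlead, hqdeg]
    have h2' : r - (r - 2) = 2 := by omega
    rw [h2']; ring
  have hcast1 : q.coeff (r - 1) = ((p.coeff (r - 1) : ℤ) : ℝ) := by
    rw [hq, Polynomial.coeff_map]; rfl
  have hcast2 : q.coeff (r - 2) = ((p.coeff (r - 2) : ℤ) : ℝ) := by
    rw [hq, Polynomial.coeff_map]; rfl
  have hsum : R.sum = (n : ℝ) := by
    have := hv1
    rw [hcast1, hc1, multiset_esymm_one] at this
    push_cast at this
    linarith
  have he2 : R.esymm 2 = (n.choose 2 : ℝ) - (γ : ℝ) := by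
    have := hv2
    rw [hcast2, hc2] at this
    push_cast at this
    linarith
  -- sum of squares
  have hchoose : (n.choose 2 : ℝ) = (n : ℝ) * ((n : ℝ) - 1) / 2 := by
    rcases Nat.eq_zero_or_pos n with h | h
    · omega
    · rw [Nat.cast_choose_two]
  have hsq : (R.map (fun x => x ^ 2)).sum
      = (n : ℝ) ^ 2 - (n : ℝ) * ((n : ℝ) - 1) + 2 * (γ : ℝ) := by
    have := sq_sum_eq R
    rw [hsum, he2, hchoose] at this
    linarith
  -- roots 1 and 2
  have hqne : q ≠ 0 := hqmonic.ne_zero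
  have hmem1 : (1 : ℝ) ∈ R := by
    rw [hR, Polynomial.mem_roots hqne]
    rw [Polynomial.IsRoot, hq, Polynomial.eval_one_map]; simpa using h1
  have hmem2 : (2 : ℝ) ∈ R := by
    rw [hR, Polynomial.mem_roots hqne]
    have h22 : ((2 : ℤ) : ℝ) = (2 : ℝ) := by norm_num
    rw [Polynomial.IsRoot, hq, ← h22, Polynomial.eval_intCast_map]
    simp [Int.cast_id, h2]
  -- split off 1 and 2
  have hR1' : R = 1 ::ₘ R.erase 1 := (Multiset.cons_erase hmem1).symm
  have hmem2' : (2 : ℝ) ∈ R.erase 1 := by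
    have := hmem2; rw [hR1', Multiset.mem_cons] at this
    rcases this with h | h
    · norm_num at h
    · exact h
  obtain ⟨s, hR1⟩ : ∃ s, R = 1 ::ₘ 2 ::ₘ s :=
    ⟨_, by conv_lhs => rw [← Multiset.cons_erase hmem1, ← Multiset.cons_erase hmem2']⟩
  have hscard : (Multiset.card s : ℝ) = (r : ℝ) - 2 := by
    have h' : Multiset.card R = Multiset.card s + 2 := by
      rw [hR1]; simp [Multiset.card_cons]
    rw [hRcard] at h'
    have : Multiset.card s = r - 2 := by omega
    rw [this]; push_cast [Nat.cast_sub hr]; ring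
  have hssum : s.sum = (n : ℝ) - 3 := by
    have := hsum; rw [hR1, Multiset.sum_cons, Multiset.sum_cons] at this; linarith
  have hssq : (s.map (fun x => x ^ 2)).sum
      = (n : ℝ) ^ 2 - (n : ℝ) * ((n : ℝ) - 1) + 2 * (γ : ℝ) - 5 := by
    have := hsq
    rw [hR1, Multiset.map_cons, Multiset.map_cons, Multiset.sum_cons, Multiset.sum_cons] at this
    norm_num at this
    linarith
  -- all elements of s are 3
  have hnr : (n : ℝ) = 3 * (r : ℝ) - 3 := by
    have h := congrArg (fun z : ℤ => (z : ℝ)) hn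
    push_cast at h
    linarith
  have hγr : (γ : ℝ) = 3 * (r : ℝ) - 5 := by
    have h := congrArg (fun z : ℤ => (z : ℝ)) hγ
    push_cast at h
    linarith
  have hzero : (s.map (fun x => (x - 3) ^ 2)).sum = 0 := by
    rw [sum_shift_sq, hssum, hssq, hscard, hnr, hγr]
    ring
  have hall : ∀ x ∈ s, x = 3 := by
    intro x hx
    have h0 := all_zero_of_nonneg_sum_zero (s := s) (f := fun x => (x - 3) ^ 2)
      (fun y _ => sq_nonneg _) hzero x hx
    have h1' : (x - 3) ^ 2 = 0 := by simpa using h0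
    have h2' : x - 3 = 0 := by
      exact pow_eq_zero_iff (two_ne_zero) |>.1 h1'
    linarith
  have hsrep : s = Multiset.replicate (r - 2) (3 : ℝ) := by
    rw [Multiset.eq_replicate]
    constructor
    · have h' : Multiset.card R = Multiset.card s + 2 := by
        rw [hR1]; simp [Multiset.card_cons]
      rw [hRcard] at h'; omega
    · exact hall
  -- reconstruct q
  have hqprod : q = (R.map (fun a => X - C a)).prod := by
    have := Polynomial.C_leadingCoeff_mul_prod_multiset_X_sub_C (p := q)
      (by rw [hqdeg]; exact hRcard)
    rw [hqlead, map_one, one_mul] at this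
    exact this.symm
  have hqfact : q = (X - C (1:ℝ)) * (X - C 2) * (X - C 3) ^ (r - 2) := by
    rw [hqprod, hR1, hsrep]
    rw [Multiset.map_cons, Multiset.map_cons, Multiset.prod_cons, Multiset.prod_cons,
      Multiset.map_replicate, Multiset.prod_replicate]
    ring
  -- descend to ℤ
  have hinj : Function.Injective (Polynomial.map (Int.castRingHom ℝ)) :=
    Polynomial.map_injective _ Int.cast_injective
  apply hinj
  rw [← hq, hqfact]
  simp only [Polynomial.map_mul, Polynomial.map_pow, Polynomial.map_sub, Polynomial.map_X,
    Polynomial.map_C]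
  norm_num

/-- Let `M` be a simple matroid of rank `r` with `3r - 3` elements,
all lines having at most 3 elements, real characteristic roots, and `χ(M;2) = 0`.
If `M` has exactly `3r - 5` three-point lines, then
`χ(M;λ) = (λ-1)(λ-2)(λ-3)^{r-2}`. -/
theorem stmt11 {α : Type} [Fintype α] [DecidableEq α] (M : Matroid α)
    (hE : M.E = Set.univ) (hsimple : mSimple M)
    (r : ℕ) (hr : mrk M Set.univ = r)
    (hcard : Fintype.card α + 3 = 3 * r)
    (hlines : linesAtMost3 M)
    (hreal : onlyRealRoots (charPoly M))
    (h2 : (charPoly M).eval 2 = 0)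
    (hγ : lineCount M 3 + 5 = 3 * r) :
    charPoly M = (X - C 1) * (X - C 2) * (X - C 3) ^ (r - 2) := by
  classical
  set n := Fintype.card α with hn
  -- r ≥ 2
  have hb := MrkAux.mrk_le_ncard (M := M) Set.univ
  rw [Set.ncard_univ, Nat.card_eq_fintype_card, hr] at hb
  have hr2 : 2 ≤ r := by omega
  have hne : Nonempty α := by
    have : 0 < n := by omega
    exact Fintype.card_pos_iff.1 this
  -- degree and monicity
  have hct : (charPoly M).coeff r = 1 := charPoly_coeff_r hE hsimple hr (by omega)
  have hdeg : (charPoly M).natDegree = r := by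
    refine le_antisymm (Polynomial.natDegree_le_iff_coeff_eq_zero.2 fun j hj => ?_)
      (Polynomial.le_natDegree_of_ne_zero (by rw [hct]; exact one_ne_zero))
    exact charPoly_coeff_gt hE hsimple hr hj
  have hmonic : (charPoly M).Monic := by
    rw [Polynomial.Monic, Polynomial.leadingCoeff, hdeg, hct]
  refine poly_rigid (charPoly M) r hr2 n (lineCount M 3) ?_ ?_ hdeg hmonic ?_ ?_ ?_ h2 hreal
  · exact_mod_cast congrArg (fun k : ℕ => (k : ℤ)) hcard
  · exact_mod_cast congrArg (fun k : ℕ => (k : ℤ)) hγ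
  · exact charPoly_coeff_r1 hE hsimple hr (by omega)
  · exact charPoly_coeff_r2 hE hsimple hlines hr hr2
  · exact charPoly_eval_one M hne
end MatroidDefs
end

section
/- Let X be a modular copoint (modular flat of rank r-1) of a simple binary matroid M of rank r, with complement D = E(M) \ X. If rank(D) = d, then M contains a submatroid isomorphic to M(K_{d+1}), the cycle matroid of the complete graph on d+1 vertices. -/
open Finset Polynomial

/-- The GF(2)-incidence vector of the edge `p = (i, j)` of the complete graph on `k`
vertices: the vector `e_i + e_j` in `(Fin k → ZMod 2)`.  A set of edges of `K_k` is
independent in the cycle matroid `M(K_k)` precisely when the corresponding vectors are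
linearly independent over GF(2). -/
def edgeVec (k : ℕ) (p : Fin k × Fin k) : Fin k → ZMod 2 :=
  fun i => (if i = p.1 then 1 else 0) + (if i = p.2 then 1 else 0)

set_option linter.unusedSectionVars false

section Helpers
variable {α : Type} [Fintype α] [DecidableEq α] {M : Matroid α} {I X X' : Set α}

lemma mrk_bdd (M : Matroid α) (X : Set α) :
    BddAbove {n | ∃ I, M.Indep I ∧ I ⊆ X ∧ I.ncard = n} := by
  refine ⟨Nat.card α, ?_⟩
  rintro n ⟨I, -, -, rfl⟩
  simpa [Set.ncard_univ] using Set.ncard_le_ncard (Set.subset_univ I) Set.finite_univ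

lemma le_mrk (hI : M.Indep I) (hIX : I ⊆ X) : I.ncard ≤ mrk M X :=
  le_csSup (mrk_bdd M X) ⟨I, hI, hIX, rfl⟩

lemma mrk_eq_of_basis' (hI : M.IsBasis' I X) : mrk M X = I.ncard := by
  refine le_antisymm (csSup_le ⟨0, ∅, M.empty_indep, Set.empty_subset _, Set.ncard_empty _⟩ ?_)
    (le_mrk hI.indep hI.subset)
  rintro n ⟨J, hJ, hJX, rfl⟩
  obtain ⟨J', hJ', hJJ'⟩ := hJ.subset_isBasis'_of_subset hJX
  have h1 : J'.encard = I.encard := hJ'.encard_eq_encard hI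
  have h2 : J'.ncard = I.ncard := by rw [Set.ncard_def, h1, ← Set.ncard_def]
  exact (Set.ncard_le_ncard hJJ' (Set.toFinite _)).trans h2.le

lemma closure_flat' (M : Matroid α) (X : Set α) : M.IsFlat (M.closure X) := by
  simp

lemma mrk_mono (M : Matroid α) (h : X ⊆ X') : mrk M X ≤ mrk M X' := by
  obtain ⟨J, hJ⟩ := M.exists_isBasis' X
  rw [mrk_eq_of_basis' hJ]
  exact le_mrk hJ.indep (hJ.subset.trans h)
end Helpers


lemma edgeVec_eq_one_iff {k : ℕ} (p : Fin k × Fin k) (hp : p.1 < p.2) (x : Fin k) :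
    edgeVec k p x = 1 ↔ (x = p.1 ∨ x = p.2) := by
  have hne : p.1 ≠ p.2 := hp.ne
  unfold edgeVec
  by_cases h1 : x = p.1 <;> by_cases h2 : x = p.2
  · exact absurd (h1 ▸ h2) hne
  · simp [h1, h2, hne]
  · simp [h1, h2, hne, Ne.symm hne]
  · simp [h1, h2]

lemma edgeVec_inj {k : ℕ} (p q : Fin k × Fin k) (hp : p.1 < p.2) (hq : q.1 < q.2)
    (h : edgeVec k p = edgeVec k q) : p = q := by
  have h1 : p.1 = q.1 ∨ p.1 = q.2 := by
    refine (edgeVec_eq_one_iff q hq p.1).mp ?_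
    rw [← congrFun h p.1]; exact (edgeVec_eq_one_iff p hp p.1).mpr (Or.inl rfl)
  have h2 : p.2 = q.1 ∨ p.2 = q.2 := by
    refine (edgeVec_eq_one_iff q hq p.2).mp ?_
    rw [← congrFun h p.2]; exact (edgeVec_eq_one_iff p hp p.2).mpr (Or.inr rfl)
  have h3 : q.1 = p.1 ∨ q.1 = p.2 := by
    refine (edgeVec_eq_one_iff p hp q.1).mp ?_
    rw [congrFun h q.1]; exact (edgeVec_eq_one_iff q hq q.1).mpr (Or.inl rfl)
  simp only [Fin.ext_iff] at h1 h2 h3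
  rw [Fin.lt_def] at hp hq
  refine Prod.ext (Fin.ext ?_) (Fin.ext ?_) <;> omega

lemma edgeVec_sum {k : ℕ} (p : Fin k × Fin k) :
    ∑ x : Fin k, edgeVec k p x = 0 := by
  unfold edgeVec
  rw [Finset.sum_add_distrib, Finset.sum_ite_eq' Finset.univ p.1 (fun _ => (1 : ZMod 2)),
    Finset.sum_ite_eq' Finset.univ p.2 (fun _ => (1 : ZMod 2))]
  simp; decide

noncomputable def buildF {α : Type} {d : ℕ} (a : Fin d → α) (B : Fin d × Fin d → α)
    (e : {p : Fin (d + 1) × Fin (d + 1) // p.1 < p.2}) : α :=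
  if h : (e.1.2 : ℕ) = d then a ⟨e.1.1, by have := Fin.lt_def.mp e.2; omega⟩
  else B (⟨e.1.1, by have := Fin.lt_def.mp e.2; have := e.1.2.isLt; omega⟩,
          ⟨e.1.2, by have := e.1.2.isLt; omega⟩)


theorem main_aux {α : Type} [Fintype α] [DecidableEq α] (M : Matroid α) {n d : ℕ}
    (φ : α → Fin n → ZMod 2)
    (hφ : ∀ I : Set α, I ⊆ M.E → (M.Indep I ↔ LinearIndependent (ZMod 2) (fun x : I => φ x)))
    (a : Fin d → α) (haE : ∀ i, a i ∈ M.E)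
    (hlin : LinearIndependent (ZMod 2) (fun i : Fin d => φ (a i)))
    (B : Fin d × Fin d → α)
    (hB : ∀ p : Fin d × Fin d, p.1 ≠ p.2 → B p ∈ M.E ∧ φ (B p) = φ (a p.1) + φ (a p.2)) :
    ∃ f : {p : Fin (d + 1) × Fin (d + 1) // p.1 < p.2} → α,
      Function.Injective f ∧ (∀ e, f e ∈ M.E) ∧
      ∀ S : Set {p : Fin (d + 1) × Fin (d + 1) // p.1 < p.2},
        (M.Indep (f '' S) ↔
          LinearIndependent (ZMod 2) (fun s : S => edgeVec (d + 1) s.1.1)) := by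
  classical
  let E' := {p : Fin (d + 1) × Fin (d + 1) // p.1 < p.2}
  let T : (Fin (d+1) → ZMod 2) →ₗ[ZMod 2] (Fin n → ZMod 2) :=
    ∑ i : Fin d, (LinearMap.proj (Fin.castSucc i)).smulRight (φ (a i))
  let σ : (Fin (d+1) → ZMod 2) →ₗ[ZMod 2] ZMod 2 := ∑ k : Fin (d+1), LinearMap.proj k
  have hT : ∀ v, T v = ∑ i : Fin d, v (Fin.castSucc i) • φ (a i) := by
    intro v; simp [T, LinearMap.sum_apply]
  have hσ : ∀ v, σ v = ∑ k : Fin (d+1), v k := by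
    intro v; simp [σ, LinearMap.sum_apply]
  have hker : ∀ v, σ v = 0 → T v = 0 → v = 0 := by
    intro v hσ0 hT0
    have hco : ∀ i : Fin d, v (Fin.castSucc i) = 0 := by
      refine Fintype.linearIndependent_iff.mp hlin (fun i => v (Fin.castSucc i)) ?_
      exact (hT v).symm.trans hT0
    have hlast : v (Fin.last d) = 0 := by
      rw [hσ v, Fin.sum_univ_castSucc] at hσ0
      simpa [hco] using hσ0
    funext k
    cases k using Fin.lastCases with
    | last => exact hlast
    | cast i => exact hco i
  let ev : E' → (Fin (d+1) → ZMod 2) := fun e => edgeVec (d+1) e.1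
  have hevσ : ∀ e : E', σ (ev e) = 0 := fun e => by rw [hσ]; exact edgeVec_sum e.1
  have key : ∀ (x : Fin (d+1)),
      ∑ i : Fin d, (if Fin.castSucc i = x then φ (a i) else 0)
        = if h : (x:ℕ) < d then φ (a ⟨x, h⟩) else 0 := by
    intro x
    by_cases h : (x:ℕ) < d
    · rw [dif_pos h, Finset.sum_eq_single (⟨(x:ℕ), h⟩ : Fin d)]
      · simp [Fin.ext_iff]
      · intro i _ hne
        rw [if_neg]
        intro hc
        exact hne (Fin.ext (by simpa using congrArg Fin.val hc))
      · intro h'; exact absurd (Finset.mem_univ _) h'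
    · rw [dif_neg h]
      refine Finset.sum_eq_zero fun i _ => ?_
      rw [if_neg]
      intro hc
      have := congrArg Fin.val hc
      simp at this
      omega
  have hφf : ∀ e : E', φ (buildF a B e) = T (ev e) := by
    rintro ⟨⟨x, y⟩, hxy⟩
    have hxy' : (x:ℕ) < (y:ℕ) := Fin.lt_def.mp hxy
    have hyd : (y:ℕ) < d + 1 := y.isLt
    have hTev : T (ev ⟨(x,y),hxy⟩) = (if h : (x:ℕ) < d then φ (a ⟨(x:ℕ), h⟩) else 0)
        + (if h : (y:ℕ) < d then φ (a ⟨(y:ℕ), h⟩) else 0) := by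
      rw [hT]
      simp only [ev, edgeVec, add_smul, ite_smul, one_smul, zero_smul]
      rw [Finset.sum_add_distrib, key x, key y]
    rw [hTev]
    have hx : (x:ℕ) < d := by omega
    rw [dif_pos hx]
    unfold buildF
    by_cases h : (y:ℕ) = d
    · rw [dif_pos h, dif_neg (by omega)]
      simp
    · have hy' : (y:ℕ) < d := by omega
      rw [dif_neg h, dif_pos hy']
      exact (hB (⟨(x:ℕ), by omega⟩, ⟨(y:ℕ), by omega⟩)
        (by simp only [Ne, Fin.mk.injEq]; omega)).2
  set f : E' → α := buildF a B with hfdef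
  have hfE : ∀ e, f e ∈ M.E := by
    intro e
    rw [hfdef]
    unfold buildF
    split_ifs with h
    · exact haE _
    · exact (hB _ (by simp only [Ne, Fin.mk.injEq]
                      exact (Fin.lt_def.mp e.2).ne)).1
  have hevInj : Function.Injective ev := fun e1 e2 h =>
    Subtype.ext (edgeVec_inj _ _ e1.2 e2.2 h)
  have hTevInj : ∀ e1 e2 : E', T (ev e1) = T (ev e2) → e1 = e2 := by
    intro e1 e2 h
    have hv1 : σ (ev e1 - ev e2) = 0 := by rw [map_sub, hevσ, hevσ, sub_zero]
    have hv2 : T (ev e1 - ev e2) = 0 := by rw [map_sub, h, sub_self]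
    exact hevInj (sub_eq_zero.mp (hker _ hv1 hv2))
  have hfinj : Function.Injective f := by
    intro e1 e2 h
    refine hTevInj e1 e2 ?_
    rw [← hφf, ← hφf]
    rw [hfdef] at h ⊢
    rw [h]
  refine ⟨f, hfinj, hfE, fun S => ?_⟩
  have hsub : f '' S ⊆ M.E := by rintro _ ⟨e, -, rfl⟩; exact hfE e
  rw [hφ _ hsub]
  have hequiv := linearIndependent_equiv (R := ZMod 2)
    (Equiv.Set.imageOfInjOn f S hfinj.injOn) (f := fun x : (f '' S : Set α) => φ x)
  rw [← hequiv]
  have hfun : ((fun x : (f '' S : Set α) => φ (x : α)) ∘ (Equiv.Set.imageOfInjOn f S hfinj.injOn))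
      = fun s : S => T (ev s.1) := by
    funext s
    simp only [Function.comp, Equiv.Set.imageOfInjOn, Equiv.coe_fn_mk]
    exact hφf s.1
  rw [hfun]
  constructor
  · intro h
    exact LinearIndependent.of_comp T h
  · intro h
    have hsp : Submodule.span (ZMod 2) (Set.range (fun s : S => ev s.1))
        ≤ LinearMap.ker σ := by
      rw [Submodule.span_le]
      rintro _ ⟨s, rfl⟩
      exact LinearMap.mem_ker.mpr (hevσ s.1)
    have hdisj : Disjoint (Submodule.span (ZMod 2) (Set.range (fun s : S => ev s.1)))
        (LinearMap.ker T) := by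
      rw [Submodule.disjoint_def]
      intro v hv1 hv2
      exact hker v (LinearMap.mem_ker.mp (hsp hv1)) (LinearMap.mem_ker.mp hv2)
    exact (h.map hdisj : _)

/-- Let `X` be a modular copoint (modular flat of rank `r - 1`) of a
simple binary matroid `M` of rank `r`, with complement `D = E(M) \ X`.  If
`rank(D) = d`, then `M` contains a submatroid isomorphic to `M(K_{d+1})`, the cycle
matroid of the complete graph on `d + 1` vertices (expressed here via its standard
binary representation by the vectors `e_i + e_j`). -/
theorem stmt17 {α : Type} [Fintype α] [DecidableEq α] (M : Matroid α)
    (hsimple : mSimple M)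
    (hbinary : ∃ (n : ℕ) (φ : α → (Fin n → ZMod 2)), ∀ I : Set α, I ⊆ M.E →
      (M.Indep I ↔ LinearIndependent (ZMod 2) (fun x : I => φ x)))
    (Y : Set α) (hmod : modularFlat M Y) (hcopoint : mrk M Y + 1 = mrk M M.E)
    (d : ℕ) (hd : mrk M (M.E \ Y) = d) :
    ∃ f : {p : Fin (d + 1) × Fin (d + 1) // p.1 < p.2} → α,
      Function.Injective f ∧ (∀ e, f e ∈ M.E) ∧
      ∀ S : Set {p : Fin (d + 1) × Fin (d + 1) // p.1 < p.2},
        (M.Indep (f '' S) ↔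
          LinearIndependent (ZMod 2) (fun s : S => edgeVec (d + 1) s.1.1)) := by

  classical
  obtain ⟨n, φ, hφ⟩ := hbinary
  have hYE : Y ⊆ M.E := hmod.1.subset_ground
  have hφinj : ∀ e ∈ M.E, ∀ f ∈ M.E, φ e = φ f → e = f := by
    intro e he f hf hef
    by_contra hne
    have hind := (hφ {e, f} (by rintro z (rfl | rfl) <;> assumption)).mp (hsimple e f he hf)
    have h1 : (⟨e, by simp⟩ : ({e, f} : Set α)) = ⟨f, by simp⟩ := hind.injective hef
    exact hne (congrArg Subtype.val h1)
  have hφ0 : ∀ e ∈ M.E, φ e ≠ 0 := by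
    intro e he h0
    have hind : M.Indep {e} := by
      have := hsimple e e he he; rwa [Set.pair_eq_singleton] at this
    have hli := (hφ {e} (by simpa using he)).mp hind
    exact hli.ne_zero ⟨e, Set.mem_singleton _⟩ h0
  obtain ⟨J, hJ⟩ := M.exists_isBasis' (M.E \ Y)
  have hJE : J ⊆ M.E \ Y := hJ.subset
  have hJfin : J.Finite := Set.toFinite J
  have hscard : hJfin.toFinset.card = d := by
    rw [← Set.ncard_eq_toFinset_card J hJfin, ← mrk_eq_of_basis' hJ, hd]
  set eqv := hJfin.toFinset.equivFinOfCardEq hscard with heqv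
  set a : Fin d → α := fun i => ((eqv.symm i : hJfin.toFinset) : α) with ha
  have haJ : ∀ i, a i ∈ J := fun i => hJfin.mem_toFinset.mp (eqv.symm i).2
  have haE : ∀ i, a i ∈ M.E := fun i => (hJE (haJ i)).1
  have haY : ∀ i, a i ∉ Y := fun i => (hJE (haJ i)).2
  have hainj : Function.Injective a := by
    intro i j h
    have : eqv.symm i = eqv.symm j := Subtype.ext h
    simpa using congrArg eqv this
  have hlin : LinearIndependent (ZMod 2) (fun i : Fin d => φ (a i)) := by
    have hli := (hφ J (fun z hz => (hJE hz).1)).mp hJ.indep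
    refine hli.comp (fun i => (⟨a i, haJ i⟩ : J)) ?_
    intro i j h
    have h2 := congrArg Subtype.val h
    exact hainj h2
  have hBex : ∀ p : Fin d × Fin d, ∃ b : α,
      p.1 ≠ p.2 → (b ∈ M.E ∧ φ b = φ (a p.1) + φ (a p.2)) := by
    rintro ⟨i, j⟩
    by_cases hij : i = j
    · exact ⟨a i, fun h => absurd hij h⟩
    simp only
    have hne : a i ≠ a j := fun h => hij (hainj h)
    have hpsub : ({a i, a j} : Set α) ⊆ M.E := by
      rintro z (rfl | rfl) <;> exact haE _
    have hpair : M.Indep {a i, a j} :=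
      hJ.indep.subset (by rintro z (rfl | rfl) <;> exact haJ _)
    set L := M.closure {a i, a j} with hL
    have hLflat : M.IsFlat L := closure_flat' M _
    have hbasis : M.IsBasis {a i, a j} L := hpair.isBasis_closure
    have hmrkL : mrk M L = 2 := by
      rw [mrk_eq_of_basis' hbasis.isBasis']; exact Set.ncard_pair hne
    have hiL : a i ∈ L := M.subset_closure _ hpsub (by simp)
    have hrank : mrk M (Y ∪ L) = mrk M Y + 1 := by
      refine le_antisymm ?_ ?_
      · rw [hcopoint]
        exact mrk_mono M (Set.union_subset hYE (M.closure_subset_ground _))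
      · obtain ⟨K, hK⟩ := M.exists_isBasis' Y
        have hKb : M.IsBasis K Y := hK.isBasis hYE
        have hKcl : M.closure K = Y := by
          rw [hKb.closure_eq_closure, hmod.1.closure]
        have hKY : K ⊆ Y := hKb.subset
        have hins : M.Indep (insert (a i) K) := by
          rw [hKb.indep.insert_indep_iff_of_notMem (fun hK' => haY i (hKY hK'))]
          exact ⟨haE i, by rw [hKcl]; exact haY i⟩
        have hsubset : insert (a i) K ⊆ Y ∪ L := by
          rintro z (rfl | hz)
          · exact Or.inr hiL
          · exact Or.inl (hKY hz)
        have hcard : (insert (a i) K).ncard = K.ncard + 1 :=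
          Set.ncard_insert_of_notMem (fun hK' => haY i (hKY hK')) (Set.toFinite _)
        rw [mrk_eq_of_basis' hK, ← hcard]
        exact le_mrk hins hsubset
    obtain ⟨b, hbY, hbL⟩ := hmod.2 L hLflat hmrkL hrank
    have hbE : b ∈ M.E := hYE hbY
    have hbi : b ≠ a i := fun h => haY i (h ▸ hbY)
    have hbj : b ≠ a j := fun h => haY j (h ▸ hbY)
    have hnotmem : b ∉ ({a i, a j} : Set α) := by
      rintro (rfl | rfl)
      exacts [hbi rfl, hbj rfl]
    have hdep : ¬ M.Indep (insert b {a i, a j}) := by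
      rw [hpair.insert_indep_iff_of_notMem hnotmem]
      exact fun h => h.2 hbL
    have hpairli : LinearIndependent (ZMod 2) (fun v : ({a i, a j} : Set α) => φ v) :=
      (hφ _ hpsub).mp hpair
    have himg : φ '' {a i, a j} = {φ (a i), φ (a j)} := Set.image_pair _ _ _
    have hφne : φ (a i) ≠ φ (a j) := fun h => hne (hφinj _ (haE i) _ (haE j) h)
    have hspan : φ b ∈ Submodule.span (ZMod 2) {φ (a i), φ (a j)} := by
      by_contra hsp
      apply hdep
      have hinsE : insert b ({a i, a j} : Set α) ⊆ M.E := by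
        rintro z (rfl | hz)
        · exact hbE
        · exact hpsub hz
      rw [hφ _ hinsE]
      have hinj2 : Set.InjOn φ {a i, a j} := by
        rintro u hu v hv huv
        exact hφinj _ (hpsub hu) _ (hpsub hv) huv
      have h2 : LinearIndependent (ZMod 2)
          (fun v : (φ '' ({a i, a j} : Set α) : Set (Fin n → ZMod 2)) => (v : Fin n → ZMod 2)) :=
        (linearIndepOn_iff_image hinj2).mp hpairli
      rw [himg] at h2
      have h3 := LinearIndepOn.id_insert h2 hsp
      have hinj3 : Set.InjOn φ (insert b ({a i, a j} : Set α)) := by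
        rintro u hu v hv huv
        exact hφinj _ (hinsE hu) _ (hinsE hv) huv
      change LinearIndepOn (ZMod 2) φ _
      rw [linearIndepOn_iff_image hinj3, Set.image_insert_eq, himg]
      exact h3
    obtain ⟨c1, c2, hc⟩ := Submodule.mem_span_pair.mp hspan
    have hcase : ∀ c : ZMod 2, c = 0 ∨ c = 1 := by decide
    rcases hcase c1 with rfl | rfl <;> rcases hcase c2 with rfl | rfl <;>
      simp only [zero_smul, one_smul, add_zero, zero_add] at hc
    · exact absurd hc.symm (hφ0 b hbE)
    · exact absurd (hφinj _ hbE _ (haE j) hc.symm) hbj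
    · exact absurd (hφinj _ hbE _ (haE i) hc.symm) hbi
    · exact ⟨b, fun _ => ⟨hbE, hc.symm⟩⟩
  choose B hB using hBex
  exact main_aux M φ hφ a haE hlin B hB
end
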